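/- Let G be a graph and r ≥ 1 an integer. If every partition (Y, Z) of V(G) with cut-rank less than r is unbalanced, then the rankwidth of G is at least r. -/

import Mathlib

open SimpleGraph
set_option linter.unusedSectionVars false

variable {N : Type} [DecidableEq N] {T : SimpleGraph N}

/-- Side of an (ordered) edge: vertices reachable to `a` after deleting edge `ab`. -/
def Sd (T : SimpleGraph N) (a b : N) : Set N :=
  {x | (T.deleteEdges {s(a,b)}).Reachable x a}

lemma del_swap (a b : N) : T.deleteEdges {s(a,b)} = T.deleteEdges {s(b,a)} := by
  rw [Sym2.eq_swap]

lemma bridge (hT : T.IsTree) {a b : N} (hab : T.Adj a b) :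
    ¬ (T.deleteEdges {s(a,b)}).Reachable a b :=
  ((isAcyclic_iff_forall_adj_isBridge.mp hT.2 hab) : _)

lemma self_mem_Sd (a b : N) : a ∈ Sd T a b := Reachable.refl a

lemma not_mem_Sd (hT : T.IsTree) {a b : N} (hab : T.Adj a b) : b ∉ Sd T a b :=
  fun h => bridge hT hab h.symm

/-- Any walk to `a` in `T - ab` avoids `b`. -/
lemma walk_avoid (hT : T.IsTree) {a b x : N} (hab : T.Adj a b)
    (p : (T.deleteEdges {s(a,b)}).Walk x a) : b ∉ p.support := by
  intro hb
  exact bridge hT hab (p.dropUntil b hb).reverse.reachable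

/-- From membership in a side, get a walk in `T` to `a` avoiding `b`. -/
lemma exists_walk_avoid (hT : T.IsTree) {a b x : N} (hab : T.Adj a b)
    (hx : x ∈ Sd T a b) : ∃ p : T.Walk x a, b ∉ p.support := by
  obtain ⟨p⟩ := hx
  refine ⟨p.transfer T ?_, ?_⟩
  · intro e he
    exact edgeSet_mono (T.deleteEdges_le _) (p.edges_subset_edgeSet he)
  · rw [Walk.support_transfer]
    exact walk_avoid hT hab p

/-- A walk in `T` avoiding `b` lifts to `T` minus any edge at `b`. -/
lemma reach_del_of_walk_avoid {x y : N} (p : T.Walk x y) {b : N} (hb : b ∉ p.support)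
    (c : N) : (T.deleteEdges {s(c,b)}).Reachable x y := by
  refine ⟨p.toDeleteEdges _ ?_⟩
  intro e he hmem
  rcases hmem with rfl
  exact hb (p.snd_mem_support_of_mem_edges (by rwa [Sym2.eq_swap] at he))

lemma mem_Sd_of_adj {a b x y : N} (hx : x ∈ Sd T a b) (hxy : T.Adj x y)
    (hne : s(x,y) ≠ s(a,b)) : y ∈ Sd T a b :=
  Reachable.trans
    (Adj.reachable (show (T.deleteEdges {s(a,b)}).Adj y x by
      rw [deleteEdges_adj]
      exact ⟨hxy.symm, by rwa [Set.mem_singleton_iff, Sym2.eq_swap]⟩)) hx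

lemma Sd_cover_step (hT : T.IsTree) {a b : N} (hab : T.Adj a b) {x y : N}
    (p : T.Walk x y) (hy : y ∈ Sd T a b ∨ y ∈ Sd T b a) :
    x ∈ Sd T a b ∨ x ∈ Sd T b a := by
  induction p with
  | nil => exact hy
  | @cons x z _ h q ih =>
    rcases ih hy with hz | hz
    · by_cases he : s(x,z) = s(a,b)
      · rcases Sym2.eq_iff.mp he with ⟨rfl, rfl⟩ | ⟨rfl, rfl⟩
        · exact absurd hz (not_mem_Sd hT hab)
        · exact Or.inr (self_mem_Sd _ _)
      · exact Or.inl (mem_Sd_of_adj hz h.symm (by rwa [Sym2.eq_swap]))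
    · by_cases he : s(x,z) = s(b,a)
      · rcases Sym2.eq_iff.mp he with ⟨rfl, rfl⟩ | ⟨rfl, rfl⟩
        · exact absurd hz (not_mem_Sd hT hab.symm)
        · exact Or.inl (self_mem_Sd _ _)
      · exact Or.inr (mem_Sd_of_adj hz h.symm (by rwa [Sym2.eq_swap]))

lemma Sd_cover (hT : T.IsTree) {a b : N} (hab : T.Adj a b) (x : N) :
    x ∈ Sd T a b ∨ x ∈ Sd T b a := by
  obtain ⟨p⟩ := hT.1.preconnected x a
  exact Sd_cover_step hT hab p (Or.inl (self_mem_Sd _ _))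

lemma Sd_disjoint (hT : T.IsTree) {a b x : N} (hab : T.Adj a b)
    (hx : x ∈ Sd T a b) : x ∉ Sd T b a := by
  intro hx'
  obtain ⟨p, hp⟩ := exists_walk_avoid hT hab hx
  obtain ⟨q, hq⟩ := exists_walk_avoid hT hab.symm hx'
  refine bridge hT hab ⟨(p.reverse.append q).toDeleteEdges _ ?_⟩
  intro e he hmem
  rcases hmem with rfl
  rw [Walk.edges_append, List.mem_append] at he
  rcases he with he | he
  · rw [Walk.edges_reverse, List.mem_reverse] at he
    exact hp (p.snd_mem_support_of_mem_edges he)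
  · exact hq (q.fst_mem_support_of_mem_edges he)

lemma Sd_nbr_disjoint (hT : T.IsTree) {b y y' x : N} (hyb : T.Adj y b)
    (hy'b : T.Adj y' b) (hne : y ≠ y') (hx : x ∈ Sd T y b) : x ∉ Sd T y' b := by
  intro hx'
  obtain ⟨p, hp⟩ := exists_walk_avoid hT hyb hx
  obtain ⟨q, hq⟩ := exists_walk_avoid hT hy'b hx'
  have hbw : b ∉ (p.reverse.append q).support := by
    rw [Walk.mem_support_append_iff, Walk.support_reverse, List.mem_reverse]
    rintro (h | h)
    · exact hp h
    · exact hq h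
  have hr : (T.deleteEdges {s(y,b)}).Reachable y y' :=
    reach_del_of_walk_avoid (p.reverse.append q) hbw y
  refine bridge hT hyb (hr.trans (Adj.reachable ?_))
  rw [deleteEdges_adj]
  refine ⟨hy'b, ?_⟩
  rw [Set.mem_singleton_iff, Sym2.eq_iff]
  rintro (⟨rfl, -⟩ | ⟨rfl, rfl⟩)
  · exact hne rfl
  · exact T.irrefl hy'b

lemma Sd_subset (hT : T.IsTree) {a b y : N} (hab : T.Adj a b) (hby : T.Adj b y)
    (hay : a ≠ y) : Sd T a b ⊆ Sd T b y := by
  intro x hx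
  obtain ⟨p, hp⟩ := exists_walk_avoid hT hab hx
  have hr : (T.deleteEdges {s(b,y)}).Reachable x a := by
    rw [del_swap]
    exact reach_del_of_walk_avoid p hp y
  refine hr.trans (Adj.reachable ?_)
  rw [deleteEdges_adj]
  refine ⟨hab, ?_⟩
  rw [Set.mem_singleton_iff, Sym2.eq_iff]
  rintro (⟨rfl, rfl⟩ | ⟨rfl, -⟩)
  · exact T.irrefl hab
  · exact hay rfl

lemma nbr_cover_step (hT : T.IsTree) (b : N) {x z : N} (p : T.Walk x z)
    (hz : (∃ y, T.Adj y b ∧ z ∈ Sd T y b) ∨ z = b) :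
    (∃ y, T.Adj y b ∧ x ∈ Sd T y b) ∨ x = b := by
  induction p with
  | nil => exact hz
  | @cons x z _ h q ih =>
    rcases ih hz with ⟨y, hyb, hmem⟩ | rfl
    · by_cases hxb : x = b
      · exact Or.inr hxb
      · refine Or.inl ⟨y, hyb, mem_Sd_of_adj hmem h.symm ?_⟩
        intro he
        have hb : b ∈ s(z, x) := by rw [he]; exact Sym2.mem_mk_right y b
        rcases Sym2.mem_iff.mp hb with rfl | rfl
        · exact not_mem_Sd hT hyb hmem
        · exact hxb rfl
    · exact Or.inl ⟨x, h, self_mem_Sd x z⟩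

lemma nbr_cover (hT : T.IsTree) {b x : N} (hx : x ≠ b) :
    ∃ y, T.Adj y b ∧ x ∈ Sd T y b := by
  obtain ⟨p⟩ := hT.1.preconnected x b
  rcases nbr_cover_step hT b p (Or.inr rfl) with h | rfl
  · exact h
  · exact absurd rfl hx

section Counting

variable [Fintype N] [DecidableRel T.Adj]

/-- The set of leaves of `T` lying on the `a`-side of the edge `ab`. -/
def Lf (T : SimpleGraph N) [Fintype N] [DecidableRel T.Adj] (a b : N) : Set N :=
  {x | x ∈ Sd T a b ∧ T.degree x = 1}

lemma exists_leaf_aux (hT : T.IsTree)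
    (hdeg : ∀ v, T.degree v ≠ 1 → T.degree v = 3) :
    ∀ n : ℕ, ∀ a b : N, T.Adj a b → (Sd T a b).ncard ≤ n →
      ∃ x, x ∈ Sd T a b ∧ T.degree x = 1 := by
  intro n
  induction n with
  | zero =>
    intro a b hab hcard
    have hpos : 0 < (Sd T a b).ncard :=
      (Set.ncard_pos (Set.toFinite _)).mpr ⟨a, self_mem_Sd a b⟩
    omega
  | succ n ih =>
    intro a b hab hcard
    by_cases hla : T.degree a = 1
    · exact ⟨a, self_mem_Sd a b, hla⟩
    · have h3 := hdeg a hla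
      have hbn : b ∈ T.neighborFinset a := by rw [mem_neighborFinset]; exact hab
      have hcpos : 0 < ((T.neighborFinset a).erase b).card := by
        rw [Finset.card_erase_of_mem hbn]
        rw [← card_neighborFinset_eq_degree] at h3
        omega
      obtain ⟨c, hc⟩ := Finset.card_pos.mp hcpos
      have hcb : c ≠ b := Finset.ne_of_mem_erase hc
      have hca : T.Adj a c := (mem_neighborFinset _ _ _).mp (Finset.mem_of_mem_erase hc)
      have hsub : Sd T c a ⊆ Sd T a b := Sd_subset hT hca.symm hab hcb
      have hss : Sd T c a ⊂ Sd T a b :=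
        ⟨hsub, fun h => not_mem_Sd hT hca.symm (h (self_mem_Sd a b))⟩
      have hlt : (Sd T c a).ncard < (Sd T a b).ncard :=
        Set.ncard_lt_ncard hss (Set.toFinite _)
      obtain ⟨x, hx, hxl⟩ := ih c a hca.symm (by omega)
      exact ⟨x, hsub hx, hxl⟩

lemma exists_leaf (hT : T.IsTree)
    (hdeg : ∀ v, T.degree v ≠ 1 → T.degree v = 3) {a b : N} (hab : T.Adj a b) :
    1 ≤ (Lf T a b).ncard := by
  obtain ⟨x, hx, hxl⟩ := exists_leaf_aux hT hdeg (Sd T a b).ncard a b hab le_rfl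
  exact (Set.ncard_pos (Set.toFinite _)).mpr ⟨x, hx, hxl⟩

lemma Lf_disjoint (hT : T.IsTree) {a b : N} (hab : T.Adj a b) :
    Disjoint (Lf T a b) (Lf T b a) := by
  rw [Set.disjoint_left]
  rintro x ⟨hx, -⟩ ⟨hx', -⟩
  exact Sd_disjoint hT hab hx hx'

lemma Lf_two_split (hT : T.IsTree) {a b : N} (hab : T.Adj a b) :
    (Lf T a b).ncard + (Lf T b a).ncard = ({x : N | T.degree x = 1}).ncard := by
  rw [← Set.ncard_union_eq (Lf_disjoint hT hab) (Set.toFinite _) (Set.toFinite _)]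
  congr 1
  ext x
  simp only [Lf, Set.mem_union, Set.mem_setOf_eq]
  constructor
  · rintro (⟨-, h⟩ | ⟨-, h⟩) <;> exact h
  · intro h
    rcases Sd_cover hT hab x with hx | hx
    · exact Or.inl ⟨hx, h⟩
    · exact Or.inr ⟨hx, h⟩

lemma Lf_nbr_disjoint (hT : T.IsTree) {b y y' : N} (hyb : T.Adj y b)
    (hy'b : T.Adj y' b) (hne : y ≠ y') : Disjoint (Lf T y b) (Lf T y' b) := by
  rw [Set.disjoint_left]
  rintro x ⟨hx, -⟩ ⟨hx', -⟩
  exact Sd_nbr_disjoint hT hyb hy'b hne hx hx'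

lemma Lf_three_split (hT : T.IsTree) {a b c d : N}
    (hne1 : a ≠ c) (hne2 : a ≠ d) (hne3 : c ≠ d)
    (hnbr : T.neighborFinset b = {a, c, d}) (h3 : T.degree b = 3) :
    (Lf T a b).ncard + (Lf T c b).ncard + (Lf T d b).ncard
      = ({x : N | T.degree x = 1}).ncard := by
  have hadj : ∀ y ∈ ({a, c, d} : Finset N), T.Adj y b := by
    intro y hy
    rw [← hnbr, mem_neighborFinset] at hy
    exact hy.symm
  have hab := hadj a (by simp)
  have hcb := hadj c (by simp)
  have hdb := hadj d (by simp)
  have hd1 : Disjoint (Lf T a b) (Lf T c b) := Lf_nbr_disjoint hT hab hcb hne1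
  have hd2 : Disjoint (Lf T a b ∪ Lf T c b) (Lf T d b) := by
    rw [Set.disjoint_union_left]
    exact ⟨Lf_nbr_disjoint hT hab hdb hne2, Lf_nbr_disjoint hT hcb hdb hne3⟩
  rw [← Set.ncard_union_eq hd1 (Set.toFinite _) (Set.toFinite _),
      ← Set.ncard_union_eq hd2 (Set.toFinite _) (Set.toFinite _)]
  congr 1
  ext x
  simp only [Lf, Set.mem_union, Set.mem_setOf_eq]
  constructor
  · rintro ((⟨-, h⟩ | ⟨-, h⟩) | ⟨-, h⟩) <;> exact h
  · intro h
    have hxb : x ≠ b := fun he => by rw [he, h3] at h; omega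
    obtain ⟨y, hyb, hmem⟩ := nbr_cover hT hxb
    have : y ∈ ({a, c, d} : Finset N) := by
      rw [← hnbr, mem_neighborFinset]; exact hyb.symm
    simp only [Finset.mem_insert, Finset.mem_singleton] at this
    rcases this with rfl | rfl | rfl
    · exact Or.inl (Or.inl ⟨hmem, h⟩)
    · exact Or.inl (Or.inr ⟨hmem, h⟩)
    · exact Or.inr ⟨hmem, h⟩

lemma two_leaves (hT : T.IsTree) (hcard : 2 ≤ Fintype.card N)
    (hdeg : ∀ v, T.degree v ≠ 1 → T.degree v = 3) :
    2 ≤ ({x : N | T.degree x = 1}).ncard := by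
  classical
  have hsum : ∑ v, T.degree v = 2 * T.edgeFinset.card :=
    T.sum_degrees_eq_twice_card_edges
  have hedge : T.edgeFinset.card + 1 = Fintype.card N := hT.card_edgeFinset
  set k := (Finset.univ.filter (fun v => T.degree v = 1)).card with hk
  have hkn : ({x : N | T.degree x = 1}).ncard = k := by
    rw [hk]
    rw [Set.ncard_eq_toFinset_card']
    congr 1
    ext x
    simp
  have hsum2 : ∑ v, T.degree v = ∑ v : N, (if T.degree v = 1 then 1 else 3) := by
    refine Finset.sum_congr rfl fun v _ => ?_
    by_cases h : T.degree v = 1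
    · simp [h]
    · simp [h, hdeg v h]
  rw [Finset.sum_ite, Finset.sum_const, Finset.sum_const, smul_eq_mul, smul_eq_mul] at hsum2
  have hsplit := Finset.card_filter_add_card_filter_not
    (s := (Finset.univ : Finset N)) (p := fun v => T.degree v = 1)
  rw [Finset.card_univ] at hsplit
  rw [hkn]
  omega

end Counting

section Leaf

variable [Fintype N] [DecidableRel T.Adj]

lemma Sd_leaf (hT : T.IsTree) {a b : N} (h1 : T.degree b = 1) (hba : T.Adj b a) :
    Sd T b a = {b} := by
  ext y
  simp only [Set.mem_singleton_iff]
  constructor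
  · intro hy
    by_contra hyb
    obtain ⟨p⟩ := hy
    have hnil : ¬ p.reverse.Nil := Walk.not_nil_of_ne (Ne.symm hyb)
    have hadj := Walk.adj_snd hnil
    rw [deleteEdges_adj] at hadj
    obtain ⟨hadj1, hadj2⟩ := hadj
    have hmem : p.reverse.getVert 1 ∈ T.neighborFinset b := by
      rw [mem_neighborFinset]; exact hadj1
    have hamem : a ∈ T.neighborFinset b := by
      rw [mem_neighborFinset]; exact hba
    have hcard1 : (T.neighborFinset b).card ≤ 1 := by
      rw [card_neighborFinset_eq_degree, h1]
    have heq : p.reverse.snd = a := Finset.card_le_one.mp hcard1 _ hmem _ hamem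
    rw [heq] at hadj2
    exact hadj2 rfl
  · rintro rfl
    exact self_mem_Sd _ _

lemma other_two {a b : N} (hab : T.Adj a b) (h3 : T.degree b = 3) :
    ∃ c d, c ≠ d ∧ a ≠ c ∧ a ≠ d ∧ T.neighborFinset b = {a, c, d} := by
  have hcard : (T.neighborFinset b).card = 3 := by
    rw [card_neighborFinset_eq_degree, h3]
  have hamem : a ∈ T.neighborFinset b := by
    rw [mem_neighborFinset]; exact hab.symm
  have hcard2 : ((T.neighborFinset b).erase a).card = 2 := by
    rw [Finset.card_erase_of_mem hamem, hcard]
  obtain ⟨c, d, hcd, herase⟩ := Finset.card_eq_two.mp hcard2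
  refine ⟨c, d, hcd, ?_, ?_, ?_⟩
  · intro h; exact Finset.ne_of_mem_erase (herase ▸ Finset.mem_insert_self c {d}) h.symm
  · intro h
    exact Finset.ne_of_mem_erase
      (herase ▸ Finset.mem_insert_of_mem (Finset.mem_singleton_self d)) h.symm
  · rw [← herase, Finset.insert_erase hamem]

end Leaf





/-- The cut-rank of a partition `(Y, Yᶜ)` of the vertices of `G`: the GF(2)-rank
of the bipartite adjacency matrix with rows `Y` and columns `Yᶜ`. -/
noncomputable def cutRank {V : Type*} [Fintype V] (G : SimpleGraph V) (Y : Set V) : ℕ := by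
  classical
  haveI : Fintype ↥Y := Fintype.ofFinite _
  haveI : Fintype ↥(Yᶜ) := Fintype.ofFinite _
  exact (Matrix.of fun (y : Y) (z : ↥(Yᶜ)) =>
    if G.Adj y.1 z.1 then (1 : ZMod 2) else 0).rank

/-- Let `G` be a graph and `r ≥ 1`.  If every partition `(Y, Yᶜ)` of `V(G)`
with cut-rank less than `r` is unbalanced, then the rankwidth of `G` is at
least `r`: every tree decomposition of `G` (cubic tree `T` whose leaves are the
vertices of `G`) has an edge of width at least `r`. -/
theorem stmt6 {V : Type*} [Fintype V] (G : SimpleGraph V) (r : ℕ) (hr : 1 ≤ r)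
    (hunbal : ∀ Y : Set V, cutRank G Y < r →
      ¬ (Fintype.card V ≤ 3 * Y.ncard ∧ 3 * Y.ncard ≤ 2 * Fintype.card V ∧
         Fintype.card V ≤ 3 * Yᶜ.ncard ∧ 3 * Yᶜ.ncard ≤ 2 * Fintype.card V)) :
    ∀ (N : Type) [Fintype N] [DecidableEq N] (T : SimpleGraph N),
      ∀ [DecidableRel T.Adj],
      T.IsTree → 2 ≤ Fintype.card N →
      (∀ v : N, T.degree v ≠ 1 → T.degree v = 3) →
      ∀ _φ : {v : N // T.degree v = 1} ≃ V,
      ∃ a b : N, T.Adj a b ∧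
        r ≤ cutRank G ((fun l => _φ l) ''
          {l : {v : N // T.degree v = 1} |
            (T.deleteEdges {s(a, b)}).Reachable l.1 a}) := by
  intro N _ _ T _ hT hcardN hdeg φ
  classical
  by_contra hcon
  push_neg at hcon
  -- notation
  set n : ℕ := ({x : N | T.degree x = 1}).ncard with hn
  have hn2 : 2 ≤ n := two_leaves hT hcardN hdeg
  -- card V = n
  have hnV : Fintype.card V = n := by
    rw [← Fintype.card_congr φ, hn, ← Nat.card_coe_set_eq, Nat.card_eq_fintype_card]
    exact Fintype.card_congr (Equiv.subtypeEquivRight (fun x => Iff.rfl))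
  -- the leaf-side sets
  have himg : ∀ a b : N,
      ((fun l => φ l) '' {l : {v : N // T.degree v = 1} |
        (T.deleteEdges {s(a, b)}).Reachable l.1 a}).ncard = (Lf T a b).ncard := by
    intro a b
    rw [Set.ncard_image_of_injective _ φ.injective]
    have : Lf T a b = Subtype.val '' {l : {v : N // T.degree v = 1} |
        (T.deleteEdges {s(a, b)}).Reachable l.1 a} := by
      ext x
      constructor
      · rintro ⟨hmem, hdeg1⟩
        exact ⟨⟨x, hdeg1⟩, hmem, rfl⟩
      · rintro ⟨l, hmem, rfl⟩
        exact ⟨hmem, l.2⟩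
    rw [this, Set.ncard_image_of_injective _ Subtype.val_injective]
  have hcompl : ∀ a b : N, T.Adj a b →
      ((fun l => φ l) '' {l : {v : N // T.degree v = 1} |
        (T.deleteEdges {s(a, b)}).Reachable l.1 a})ᶜ
      = (fun l => φ l) '' {l : {v : N // T.degree v = 1} |
        (T.deleteEdges {s(b, a)}).Reachable l.1 b} := by
    intro a b hab
    have hset : {l : {v : N // T.degree v = 1} |
        (T.deleteEdges {s(a, b)}).Reachable l.1 a}ᶜ
        = {l : {v : N // T.degree v = 1} |
        (T.deleteEdges {s(b, a)}).Reachable l.1 b} := by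
      ext l
      constructor
      · intro h
        rcases Sd_cover hT hab l.1 with h' | h'
        · exact absurd h' h
        · exact h'
      · intro h h'
        exact Sd_disjoint hT hab h' h
    rw [← hset, Set.image_compl_eq φ.bijective]
  -- unbalancedness in terms of leaf counts
  have key : ∀ a b : N, T.Adj a b →
      3 * (Lf T a b).ncard < n ∨ 2 * n < 3 * (Lf T a b).ncard := by
    intro a b hab
    have h1 := hunbal _ (hcon a b hab)
    rw [hnV, himg a b, hcompl a b hab, himg b a] at h1
    have h4 := Lf_two_split hT hab
    rw [← hn] at h4
    by_contra hK
    push_neg at hK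
    exact h1 ⟨hK.1, hK.2, by omega, by omega⟩
  -- the candidate set of (ordered) edges
  set f : N × N → ℕ := fun p => (Lf T p.1 p.2).ncard with hf
  set E : Finset (N × N) :=
    Finset.univ.filter (fun p => T.Adj p.1 p.2 ∧ 3 * f p ≤ 2 * n) with hE
  have hEne : E.Nonempty := by
    have hepos : 0 < T.edgeFinset.card := by
      have := hT.card_edgeFinset
      omega
    obtain ⟨e, he⟩ := Finset.card_pos.mp hepos
    rw [mem_edgeFinset] at he
    induction e with
    | h a b =>
      have hab : T.Adj a b := he
      have h4 := Lf_two_split hT hab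
      rw [← hn] at h4
      rcases key a b hab with h | h
      · exact ⟨(a, b), by simp [hE, hf, hab]; omega⟩
      · exact ⟨(b, a), by simp [hE, hf, hab.symm]; omega⟩
  obtain ⟨⟨a, b⟩, hmemE, hmax⟩ := E.exists_max_image f hEne
  simp only [hE, Finset.mem_filter, Finset.mem_univ, true_and] at hmemE
  obtain ⟨hab, hble⟩ := hmemE
  have hblt : 3 * f (a, b) < n := by
    rcases key a b hab with h | h
    · exact h
    · simp only [hf] at hble h ⊢; omega
  -- b is not a leaf
  have hb3 : T.degree b = 3 := by
    apply hdeg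
    intro h1
    have hsd : Sd T b a = {b} := Sd_leaf hT h1 hab.symm
    have hLf : Lf T b a = {b} := by
      ext x
      simp only [Lf, hsd, Set.mem_singleton_iff, Set.mem_setOf_eq]
      constructor
      · rintro ⟨h, -⟩; exact h
      · rintro rfl; exact ⟨rfl, h1⟩
    have h4 := Lf_two_split hT hab
    rw [← hn, hLf, Set.ncard_singleton] at h4
    simp only [hf] at hblt
    omega
  obtain ⟨c, d, hcd, hac, had, hnbr⟩ := other_two hab hb3
  have hadjnbr : ∀ y ∈ ({a, c, d} : Finset N), T.Adj y b := by
    intro y hy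
    rw [← hnbr, mem_neighborFinset] at hy
    exact hy.symm
  have hcb : T.Adj c b := hadjnbr c (by simp)
  have hdb : T.Adj d b := hadjnbr d (by simp)
  -- final step, symmetric in c and d
  have final : ∀ c d : N, c ≠ d → a ≠ c → a ≠ d →
      T.neighborFinset b = {a, c, d} → T.Adj c b → T.Adj d b →
      (Lf T c b).ncard ≤ (Lf T d b).ncard → False := by
    intro c d hcd hac had hnbr hcb hdb hCD
    have h3 := Lf_three_split hT hac had hcd hnbr hb3
    rw [← hn] at h3
    have hC1 : 1 ≤ (Lf T c b).ncard := exists_leaf hT hdeg hcb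
    have h5 := Lf_two_split hT hdb.symm
    rw [← hn] at h5
    simp only [hf] at hblt
    have hmemE' : (b, d) ∈ E := by
      simp only [hE, Finset.mem_filter, Finset.mem_univ, true_and, hf]
      exact ⟨hdb.symm, by omega⟩
    have := hmax (b, d) hmemE'
    simp only [hf] at this
    omega
  rcases le_total ((Lf T c b).ncard) ((Lf T d b).ncard) with h | h
  · exact final c d hcd hac had hnbr hcb hdb h
  · refine final d c hcd.symm had hac ?_ hdb hcb h
    rw [hnbr]
    congr 1
    exact Finset.pair_comm c d
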